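/- Let d ∈ {1,2,3}, ν > 0, and α₁₁, α₂₂, α₁₂, σ₁₁, σ₂₂ > 0, ρ₁₂ ∈ (−1,1). Define the bivariate Matérn spectral density matrix F(λ) with entries F_{ij}(λ) = ρ_{ij} σ_{ii} σ_{jj} (Γ(ν+d/2)/(Γ(ν) π^{d/2})) α_{ij}^d (1 + α_{ij}² ‖λ‖²)^{−ν−d/2}, where ρ₁₁ = ρ₂₂ = 1 and α₂₁ = α₁₂. If ρ₁₂² < (α₁₂^{4ν}/(α₁₁^{2ν} α₂₂^{2ν})) · inf_{t≥0} (α₁₂^{−2}+t²)^{2ν+d} / ((α₁₁^{−2}+t²)^{ν+d/2}(α₂₂^{−2}+t²)^{ν+d/2}), then there exist constants 0 < c < c' < ∞ such that for all λ ∈ ℝ^d, c (1+‖λ‖)^{−2ν−d} I₂ ≤ F(λ) ≤ c' (1+‖λ‖)^{−2ν−d} I₂ in the Loewner order. -/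

import Mathlib

open Matrix

/-- The Matérn isotropic spectral density in ℝ^d. -/
noncomputable def maternHat (d : ℕ) (ν α z : ℝ) : ℝ :=
  Real.Gamma (ν + d / 2) / (Real.pi ^ ((d : ℝ) / 2) * Real.Gamma ν) *
    α ^ (d : ℕ) * (1 + α ^ 2 * z ^ 2) ^ (-ν - d / 2)

/-- The bivariate Matérn spectral density matrix. -/
noncomputable def bivMaternHat (d : ℕ) (ν α₁₁ α₂₂ α₁₂ σ₁₁ σ₂₂ ρ₁₂ z : ℝ) :
    Matrix (Fin 2) (Fin 2) ℝ :=
  !![σ₁₁ * σ₁₁ * maternHat d ν α₁₁ z, ρ₁₂ * σ₁₁ * σ₂₂ * maternHat d ν α₁₂ z;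
     ρ₁₂ * σ₁₁ * σ₂₂ * maternHat d ν α₁₂ z, σ₂₂ * σ₂₂ * maternHat d ν α₂₂ z]

lemma posSemidef_fin_two {a b e : ℝ} (ha : 0 ≤ a) (he : 0 ≤ e) (hdet : b^2 ≤ a*e) :
    (!![a,b;b,e] : Matrix (Fin 2) (Fin 2) ℝ).PosSemidef := by
  rw [Matrix.posSemidef_iff_dotProduct_mulVec]
  constructor
  · ext i j
    fin_cases i <;> fin_cases j <;>
      simp [Matrix.conjTranspose, Matrix.transpose, Matrix.vecHead, Matrix.vecTail]
  · intro x
    have hx : star x ⬝ᵥ (!![a,b;b,e] : Matrix (Fin 2) (Fin 2) ℝ) *ᵥ x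
        = a * x 0 ^ 2 + 2*b*(x 0)*(x 1) + e * x 1 ^2 := by
      simp [dotProduct, Matrix.mulVec, Fin.sum_univ_two]
      ring
    rw [hx]
    rcases eq_or_lt_of_le he with h | h
    · have hb : b = 0 := by nlinarith [sq_nonneg b]
      rw [hb, ← h]
      nlinarith [sq_nonneg (x 0)]
    · nlinarith [sq_nonneg (e * x 1 + b * x 0), sq_nonneg (x 0), mul_pos h h]

lemma maternHat_eq (d : ℕ) (ν α z : ℝ) (hα : 0 < α) :
    maternHat d ν α z =
      Real.Gamma (ν + d / 2) / (Real.pi ^ ((d : ℝ) / 2) * Real.Gamma ν) *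
        (α ^ (-(2*ν)) * (α ^ (-2 : ℝ) + z ^ 2) ^ (-(ν + (d:ℝ) / 2))) := by
  unfold maternHat
  have h2 : α ^ (2:ℝ) = α ^ 2 := by
    rw [← Real.rpow_natCast α 2]; norm_num
  have hbase : 1 + α ^ 2 * z ^ 2 = α ^ (2:ℝ) * (α ^ (-2:ℝ) + z ^ 2) := by
    rw [h2, Real.rpow_neg hα.le, h2]
    field_simp
  rw [hbase, Real.mul_rpow (by positivity) (by positivity),
    ← Real.rpow_natCast α d, ← Real.rpow_mul hα.le]
  have h3 : -ν - (d:ℝ)/2 = -(ν + (d:ℝ)/2) := by ring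
  rw [h3, mul_assoc]
  congr 1
  rw [← mul_assoc, ← Real.rpow_add hα]
  congr 2
  ring

lemma rpow_neg_anti {x y p : ℝ} (hx : 0 < x) (hxy : x ≤ y) (hp : 0 ≤ p) :
    y ^ (-p) ≤ x ^ (-p) := by
  rw [Real.rpow_neg hx.le, Real.rpow_neg (hx.trans_le hxy).le]
  exact inv_anti₀ (Real.rpow_pos_of_pos hx p) (Real.rpow_le_rpow hx.le hxy hp)

lemma maternHat_comparable (d : ℕ) (ν α : ℝ) (hν : 0 < ν) (hα : 0 < α) :
    ∃ L U : ℝ, 0 < L ∧ L ≤ U ∧ ∀ z : ℝ, 0 ≤ z →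
      L * (1+z) ^ (-(2*ν) - (d:ℝ)) ≤ maternHat d ν α z ∧
      maternHat d ν α z ≤ U * (1+z) ^ (-(2*ν) - (d:ℝ)) := by
  set p : ℝ := ν + (d:ℝ)/2 with hpdef
  have hp : 0 < p := by positivity
  set K0 : ℝ := Real.Gamma (ν + d / 2) / (Real.pi ^ ((d : ℝ) / 2) * Real.Gamma ν) with hK0def
  have hK0 : 0 < K0 := by
    apply div_pos (Real.Gamma_pos_of_pos (by positivity))
    exact mul_pos (Real.rpow_pos_of_pos Real.pi_pos _) (Real.Gamma_pos_of_pos hν)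
  set M1 : ℝ := max (α ^ (-2:ℝ)) 1 with hM1def
  set M2 : ℝ := 2 * max 1 (α ^ 2) with hM2def
  have hM1 : 1 ≤ M1 := le_max_right _ _
  have hM2 : 1 ≤ M2 := by
    have : (1:ℝ) ≤ max 1 (α^2) := le_max_left _ _
    nlinarith
  have hM1pos : 0 < M1 := by linarith
  have hM2pos : 0 < M2 := by linarith
  refine ⟨K0 * α ^ (-(2*ν)) * M1 ^ (-p), K0 * α ^ (-(2*ν)) * M2 ^ p, by positivity, ?_, ?_⟩
  · have h1 : M1 ^ (-p) ≤ 1 := by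
      calc M1 ^ (-p) ≤ M1 ^ (0:ℝ) :=
        Real.rpow_le_rpow_of_exponent_le hM1 (by linarith)
      _ = 1 := Real.rpow_zero _
    have h2 : (1:ℝ) ≤ M2 ^ p := by
      calc (1:ℝ) = M2 ^ (0:ℝ) := (Real.rpow_zero _).symm
      _ ≤ M2 ^ p := Real.rpow_le_rpow_of_exponent_le hM2 hp.le
    have : 0 < K0 * α ^ (-(2*ν)) := by positivity
    nlinarith
  intro z hz
  set X : ℝ := α ^ (-2:ℝ) + z ^ 2 with hXdef
  have hXpos : 0 < X := by positivity
  have h1z : (0:ℝ) < 1 + z := by linarith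
  have hWeq : (1+z) ^ (-(2*ν) - (d:ℝ)) = ((1+z)^2) ^ (-p) := by
    rw [← Real.rpow_natCast (1+z) 2, ← Real.rpow_mul h1z.le]
    congr 1
    push_cast
    ring
  have hW2pos : (0:ℝ) < ((1+z)^2) ^ (-p) := Real.rpow_pos_of_pos (by positivity) _
  have hub : X ≤ M1 * (1+z)^2 := by
    have h1 : α ^ (-2:ℝ) ≤ M1 := le_max_left _ _
    have h2 : (1:ℝ) ≤ M1 := hM1
    nlinarith [sq_nonneg z]
  have hlb : (1+z)^2 ≤ M2 * X := by
    have h1 : α^2 ≤ max 1 (α^2) := le_max_right _ _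
    have h2 : (1:ℝ) ≤ max 1 (α^2) := le_max_left _ _
    have h3 : 0 < α ^ (-2:ℝ) := Real.rpow_pos_of_pos hα _
    have ha2 : α ^ (-2:ℝ) * α ^ 2 = 1 := by
      rw [Real.rpow_neg hα.le, ← Real.rpow_natCast α 2]
      norm_num
      exact inv_mul_cancel₀ (by positivity)
    have h4 : (1:ℝ) ≤ max 1 (α^2) * α ^ (-2:ℝ) := by
      nlinarith
    nlinarith [sq_nonneg (1-z), sq_nonneg z]
  have hlow : M1 ^ (-p) * ((1+z)^2) ^ (-p) ≤ X ^ (-p) := by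
    have := rpow_neg_anti hXpos hub hp.le
    rwa [Real.mul_rpow hM1pos.le (by positivity)] at this
  have hup : X ^ (-p) ≤ M2 ^ p * ((1+z)^2) ^ (-p) := by
    have h := rpow_neg_anti (by positivity : (0:ℝ) < (1+z)^2) hlb hp.le
    rw [Real.mul_rpow hM2pos.le hXpos.le] at h
    have hc : M2 ^ p * (M2 ^ (-p) * X ^ (-p)) = X ^ (-p) := by
      rw [← mul_assoc, ← Real.rpow_add hM2pos]
      simp
    calc X ^ (-p) = M2 ^ p * (M2 ^ (-p) * X ^ (-p)) := hc.symm
    _ ≤ M2 ^ p * ((1+z)^2) ^ (-p) :=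
      mul_le_mul_of_nonneg_left h (by positivity)
  rw [maternHat_eq d ν α z hα, ← hK0def, ← hXdef, ← hpdef, hWeq]
  constructor
  · calc K0 * α ^ (-(2*ν)) * M1 ^ (-p) * ((1+z)^2) ^ (-p)
        = K0 * α ^ (-(2*ν)) * (M1 ^ (-p) * ((1+z)^2) ^ (-p)) := by ring
    _ ≤ K0 * α ^ (-(2*ν)) * X ^ (-p) := by
        apply mul_le_mul_of_nonneg_left hlow (by positivity)
    _ = K0 * (α ^ (-(2*ν)) * X ^ (-p)) := by ring
  · calc K0 * (α ^ (-(2*ν)) * X ^ (-p))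
        = K0 * α ^ (-(2*ν)) * X ^ (-p) := by ring
    _ ≤ K0 * α ^ (-(2*ν)) * (M2 ^ p * ((1+z)^2) ^ (-p)) :=
        mul_le_mul_of_nonneg_left hup (by positivity)
    _ = K0 * α ^ (-(2*ν)) * M2 ^ p * ((1+z)^2) ^ (-p) := by ring

lemma zpow_neg_two_eq (α : ℝ) : α ^ (-2 : ℤ) = α ^ (-2 : ℝ) := by
  rw [← Real.rpow_intCast α (-2)]; norm_num

lemma maternHat_cross_identity (d : ℕ) (ν α₁₁ α₂₂ α₁₂ z : ℝ)
    (hα₁₁ : 0 < α₁₁) (hα₂₂ : 0 < α₂₂) (hα₁₂ : 0 < α₁₂) :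
    maternHat d ν α₁₂ z ^ 2 *
      (α₁₂ ^ (4 * ν) / (α₁₁ ^ (2 * ν) * α₂₂ ^ (2 * ν))) *
      ((α₁₂ ^ (-2 : ℤ) + z ^ 2) ^ (2 * ν + d) /
        ((α₁₁ ^ (-2 : ℤ) + z ^ 2) ^ (ν + d / 2) *
          (α₂₂ ^ (-2 : ℤ) + z ^ 2) ^ (ν + d / 2)))
      = maternHat d ν α₁₁ z * maternHat d ν α₂₂ z := by
  rw [zpow_neg_two_eq α₁₁, zpow_neg_two_eq α₂₂, zpow_neg_two_eq α₁₂,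
    maternHat_eq d ν α₁₁ z hα₁₁, maternHat_eq d ν α₂₂ z hα₂₂, maternHat_eq d ν α₁₂ z hα₁₂]
  set K0 : ℝ := Real.Gamma (ν + d / 2) / (Real.pi ^ ((d : ℝ) / 2) * Real.Gamma ν)
  set A : ℝ := α₁₁ ^ (-2:ℝ) + z ^ 2 with hAdef
  set B : ℝ := α₂₂ ^ (-2:ℝ) + z ^ 2 with hBdef
  set C : ℝ := α₁₂ ^ (-2:ℝ) + z ^ 2 with hCdef
  set p : ℝ := ν + (d:ℝ)/2 with hpdef
  have hA : 0 < A := by positivity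
  have hB : 0 < B := by positivity
  have hC : 0 < C := by positivity
  have eC : C ^ (2*ν + (d:ℝ)) = C ^ p * C ^ p := by
    rw [← Real.rpow_add hC]; congr 1; rw [hpdef]; ring
  have e12 : α₁₂ ^ (4*ν) = α₁₂ ^ (2*ν) * α₁₂ ^ (2*ν) := by
    rw [← Real.rpow_add hα₁₂]; congr 1; ring
  have n11 : α₁₁ ^ (-(2*ν)) = (α₁₁ ^ (2*ν))⁻¹ := Real.rpow_neg hα₁₁.le _
  have n22 : α₂₂ ^ (-(2*ν)) = (α₂₂ ^ (2*ν))⁻¹ := Real.rpow_neg hα₂₂.le _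
  have n12 : α₁₂ ^ (-(2*ν)) = (α₁₂ ^ (2*ν))⁻¹ := Real.rpow_neg hα₁₂.le _
  have nA : A ^ (-p) = (A ^ p)⁻¹ := Real.rpow_neg hA.le _
  have nB : B ^ (-p) = (B ^ p)⁻¹ := Real.rpow_neg hB.le _
  have nC : C ^ (-p) = (C ^ p)⁻¹ := Real.rpow_neg hC.le _
  have hAp : A ^ p ≠ 0 := (Real.rpow_pos_of_pos hA p).ne'
  have hBp : B ^ p ≠ 0 := (Real.rpow_pos_of_pos hB p).ne'
  have hCp : C ^ p ≠ 0 := (Real.rpow_pos_of_pos hC p).ne'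
  have h11p : α₁₁ ^ (2*ν) ≠ 0 := (Real.rpow_pos_of_pos hα₁₁ _).ne'
  have h22p : α₂₂ ^ (2*ν) ≠ 0 := (Real.rpow_pos_of_pos hα₂₂ _).ne'
  have h12p : α₁₂ ^ (2*ν) ≠ 0 := (Real.rpow_pos_of_pos hα₁₂ _).ne'
  rw [eC, e12, n11, n22, n12, nA, nB, nC]
  field_simp

lemma cross_arith {r M C I gg m11 m22 : ℝ} (hr : 0 ≤ r) (hM : 0 ≤ M) (hC : 0 < C)
    (hI : 0 < I) (hIg : I ≤ gg) (hid : M * C * gg = m11 * m22) :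
    r * M ≤ r / (C * I) * (m11 * m22) := by
  rw [← hid]
  have h : r / (C*I) * (M * C * gg) = r * M * (gg / I) := by field_simp
  rw [h]
  exact le_mul_of_one_le_right (mul_nonneg hr hM) ((one_le_div hI).2 hIg)

set_option maxHeartbeats 1600000 in
theorem stmt8 (d : ℕ) (hd : d ∈ ({1, 2, 3} : Set ℕ)) (ν α₁₁ α₂₂ α₁₂ σ₁₁ σ₂₂ ρ₁₂ : ℝ)
    (hν : 0 < ν) (hα₁₁ : 0 < α₁₁) (hα₂₂ : 0 < α₂₂) (hα₁₂ : 0 < α₁₂)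
    (hσ₁₁ : 0 < σ₁₁) (hσ₂₂ : 0 < σ₂₂) (hρ : ρ₁₂ ∈ Set.Ioo (-1 : ℝ) 1)
    (hcond : ρ₁₂ ^ 2 <
      α₁₂ ^ (4 * ν) / (α₁₁ ^ (2 * ν) * α₂₂ ^ (2 * ν)) *
        ⨅ t : Set.Ici (0 : ℝ),
          (α₁₂ ^ (-2 : ℤ) + (t : ℝ) ^ 2) ^ (2 * ν + d) /
            ((α₁₁ ^ (-2 : ℤ) + (t : ℝ) ^ 2) ^ (ν + d / 2) *
              (α₂₂ ^ (-2 : ℤ) + (t : ℝ) ^ 2) ^ (ν + d / 2))) :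
    ∃ c c' : ℝ, 0 < c ∧ c < c' ∧ ∀ lam : EuclideanSpace ℝ (Fin d),
      (bivMaternHat d ν α₁₁ α₂₂ α₁₂ σ₁₁ σ₂₂ ρ₁₂ ‖lam‖ -
        (c * (1 + ‖lam‖) ^ (-(2 * ν) - d)) • (1 : Matrix (Fin 2) (Fin 2) ℝ)).PosSemidef ∧
      ((c' * (1 + ‖lam‖) ^ (-(2 * ν) - d)) • (1 : Matrix (Fin 2) (Fin 2) ℝ) -
        bivMaternHat d ν α₁₁ α₂₂ α₁₂ σ₁₁ σ₂₂ ρ₁₂ ‖lam‖).PosSemidef := by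
  obtain ⟨hρl, hρu⟩ := hρ
  obtain ⟨L₁, U₁, hL₁, hLU₁, hB₁⟩ := maternHat_comparable d ν α₁₁ hν hα₁₁
  obtain ⟨L₂, U₂, hL₂, hLU₂, hB₂⟩ := maternHat_comparable d ν α₂₂ hν hα₂₂
  obtain ⟨L₃, U₃, hL₃, hLU₃, hB₃⟩ := maternHat_comparable d ν α₁₂ hν hα₁₂
  have hU₁ : 0 < U₁ := lt_of_lt_of_le hL₁ hLU₁
  have hU₂ : 0 < U₂ := lt_of_lt_of_le hL₂ hLU₂
  have hU₃ : 0 < U₃ := lt_of_lt_of_le hL₃ hLU₃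
  set Cc : ℝ := α₁₂ ^ (4 * ν) / (α₁₁ ^ (2 * ν) * α₂₂ ^ (2 * ν)) with hCcdef
  have hCc : 0 < Cc := by
    rw [hCcdef]
    exact div_pos (Real.rpow_pos_of_pos hα₁₂ _)
      (mul_pos (Real.rpow_pos_of_pos hα₁₁ _) (Real.rpow_pos_of_pos hα₂₂ _))
  set Iinf : ℝ := ⨅ t : Set.Ici (0 : ℝ),
      (α₁₂ ^ (-2 : ℤ) + (t : ℝ) ^ 2) ^ (2 * ν + d) /
        ((α₁₁ ^ (-2 : ℤ) + (t : ℝ) ^ 2) ^ (ν + d / 2) *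
          (α₂₂ ^ (-2 : ℤ) + (t : ℝ) ^ 2) ^ (ν + d / 2)) with hIdef
  have hI0 : 0 < Iinf := by
    have h := lt_of_le_of_lt (sq_nonneg ρ₁₂) hcond
    by_contra hI
    push_neg at hI
    nlinarith [mul_nonneg hCc.le (neg_nonneg.mpr hI)]
  have hIg : ∀ z : ℝ, 0 ≤ z → Iinf ≤
      (α₁₂ ^ (-2 : ℤ) + z ^ 2) ^ (2 * ν + d) /
        ((α₁₁ ^ (-2 : ℤ) + z ^ 2) ^ (ν + d / 2) *
          (α₂₂ ^ (-2 : ℤ) + z ^ 2) ^ (ν + d / 2)) := by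
    intro z hz
    rw [hIdef]
    have hbdd : BddBelow (Set.range fun t : Set.Ici (0:ℝ) =>
        (α₁₂ ^ (-2 : ℤ) + (t : ℝ) ^ 2) ^ (2 * ν + d) /
          ((α₁₁ ^ (-2 : ℤ) + (t : ℝ) ^ 2) ^ (ν + d / 2) *
            (α₂₂ ^ (-2 : ℤ) + (t : ℝ) ^ 2) ^ (ν + d / 2))) := by
      refine ⟨0, ?_⟩
      rintro x ⟨t, rfl⟩
      positivity
    exact ciInf_le hbdd ⟨z, hz⟩
  set θ : ℝ := ρ₁₂ ^ 2 / (Cc * Iinf) with hθdef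
  have hθ0 : 0 ≤ θ := by positivity
  have hθ1 : θ < 1 := (div_lt_one (mul_pos hCc hI0)).2 hcond
  have h1θ : 0 < 1 - θ := by linarith
  have hkey : ∀ z : ℝ, 0 ≤ z →
      ρ₁₂ ^ 2 * maternHat d ν α₁₂ z ^ 2 ≤
        θ * (maternHat d ν α₁₁ z * maternHat d ν α₂₂ z) := by
    intro z hz
    have hid := maternHat_cross_identity d ν α₁₁ α₂₂ α₁₂ z hα₁₁ hα₂₂ hα₁₂
    rw [← hCcdef] at hid
    have h := cross_arith (sq_nonneg ρ₁₂) (sq_nonneg (maternHat d ν α₁₂ z)) hCc hI0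
      (hIg z hz) hid
    rw [hθdef]
    linarith [h]
  clear_value θ Iinf Cc
  clear hcond hIg hIdef hθdef hCcdef hCc hI0
  -- constants
  set D : ℝ := (1-θ) * (σ₁₁*σ₁₁*L₁) * (σ₂₂*σ₂₂*L₂) with hDdef
  have hD : 0 < D := by rw [hDdef]; positivity
  set S : ℝ := σ₁₁*σ₁₁*U₁ + σ₂₂*σ₂₂*U₂ with hSdef
  have hS : 0 < S := by rw [hSdef]; positivity
  set c : ℝ := min (min (σ₁₁*σ₁₁*L₁) (σ₂₂*σ₂₂*L₂)) (D/S) with hcdef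
  have hc : 0 < c := lt_min (lt_min (by positivity) (by positivity)) (div_pos hD hS)
  set c' : ℝ := max (c+1) (σ₁₁*σ₁₁*U₁ + σ₂₂*σ₂₂*U₂ + σ₁₁*σ₂₂*U₃) with hc'def
  have hcc' : c < c' := lt_of_lt_of_le (lt_add_one c) (le_max_left _ _)
  have hca : c ≤ σ₁₁*σ₁₁*L₁ := le_trans (min_le_left _ _) (min_le_left _ _)
  have hce : c ≤ σ₂₂*σ₂₂*L₂ := le_trans (min_le_left _ _) (min_le_right _ _)
  have hcD : c * S ≤ D := by
    have h := min_le_right (min (σ₁₁*σ₁₁*L₁) (σ₂₂*σ₂₂*L₂)) (D/S)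
    rw [← hcdef] at h
    calc c * S ≤ (D/S) * S := mul_le_mul_of_nonneg_right h hS.le
    _ = D := by field_simp
  have hc'S : σ₁₁*σ₁₁*U₁ + σ₂₂*σ₂₂*U₂ + σ₁₁*σ₂₂*U₃ ≤ c' := le_max_right _ _
  have hDexp : D = (1-θ) * (σ₁₁*σ₁₁*L₁) * (σ₂₂*σ₂₂*L₂) := hDdef
  have hSexp : S = σ₁₁*σ₁₁*U₁ + σ₂₂*σ₂₂*U₂ := hSdef
  clear_value D S c c'
  clear hcdef hc'def hDdef hSdef
  refine ⟨c, c', hc, hcc', ?_⟩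
  intro lam
  set z : ℝ := ‖lam‖ with hzdef
  have hz : 0 ≤ z := norm_nonneg _
  set W : ℝ := (1 + z) ^ (-(2 * ν) - (d:ℝ)) with hWdef
  have hW0 : 0 < W := Real.rpow_pos_of_pos (by linarith) _
  obtain ⟨h1l, h1u⟩ := hB₁ z hz
  obtain ⟨h2l, h2u⟩ := hB₂ z hz
  obtain ⟨h3l, h3u⟩ := hB₃ z hz
  have hkz := hkey z hz
  set m₁ : ℝ := maternHat d ν α₁₁ z with hm1def
  set m₂ : ℝ := maternHat d ν α₂₂ z with hm2def
  set m₃ : ℝ := maternHat d ν α₁₂ z with hm3def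
  rw [← hWdef] at h1l h1u h2l h2u h3l h3u
  have hm₃0 : 0 ≤ m₃ := le_trans (by positivity) h3l
  have hb2 : (ρ₁₂*σ₁₁*σ₂₂*m₃)^2 ≤ θ * (σ₁₁*σ₁₁*m₁) * (σ₂₂*σ₂₂*m₂) := by
    have f := mul_le_mul_of_nonneg_left hkz (show (0:ℝ) ≤ (σ₁₁*σ₂₂)^2 by positivity)
    linarith [f]
  have hmat1 : bivMaternHat d ν α₁₁ α₂₂ α₁₂ σ₁₁ σ₂₂ ρ₁₂ z -
        (c*W) • (1 : Matrix (Fin 2) (Fin 2) ℝ)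
      = !![σ₁₁*σ₁₁*m₁ - c*W, ρ₁₂*σ₁₁*σ₂₂*m₃; ρ₁₂*σ₁₁*σ₂₂*m₃, σ₂₂*σ₂₂*m₂ - c*W] := by
    ext i j
    fin_cases i <;> fin_cases j <;>
      simp [bivMaternHat, hm1def, hm2def, hm3def, Matrix.one_apply,
        Matrix.sub_apply, Matrix.smul_apply]
  have hmat2 : (c'*W) • (1 : Matrix (Fin 2) (Fin 2) ℝ) -
        bivMaternHat d ν α₁₁ α₂₂ α₁₂ σ₁₁ σ₂₂ ρ₁₂ z
      = !![c'*W - σ₁₁*σ₁₁*m₁, -(ρ₁₂*σ₁₁*σ₂₂*m₃); -(ρ₁₂*σ₁₁*σ₂₂*m₃), c'*W - σ₂₂*σ₂₂*m₂] := by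
    ext i j
    fin_cases i <;> fin_cases j <;>
      simp [bivMaternHat, hm1def, hm2def, hm3def, Matrix.one_apply,
        Matrix.sub_apply, Matrix.smul_apply]
  clear_value z W m₁ m₂ m₃
  clear hB₁ hB₂ hB₃ hkey hkz lam hzdef hWdef hm1def hm2def hm3def hd
  constructor
  · rw [hmat1]
    have e1 : σ₁₁*σ₁₁*(L₁*W) ≤ σ₁₁*σ₁₁*m₁ :=
      mul_le_mul_of_nonneg_left h1l (by positivity)
    have e2 : σ₂₂*σ₂₂*(L₂*W) ≤ σ₂₂*σ₂₂*m₂ :=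
      mul_le_mul_of_nonneg_left h2l (by positivity)
    have e1c : c*W ≤ σ₁₁*σ₁₁*L₁*W := mul_le_mul_of_nonneg_right hca hW0.le
    have e2c : c*W ≤ σ₂₂*σ₂₂*L₂*W := mul_le_mul_of_nonneg_right hce hW0.le
    apply posSemidef_fin_two
    · linarith [e1, e1c]
    · linarith [e2, e2c]
    · have hprod : D * W^2 ≤ (1-θ) * ((σ₁₁*σ₁₁*m₁) * (σ₂₂*σ₂₂*m₂)) := by
        have h7 := mul_le_mul e1 e2 (by positivity) (le_trans (by positivity) e1)
        have h8 := mul_le_mul_of_nonneg_left h7 h1θ.le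
        rw [hDexp]
        linarith [h8]
      have h9 : (σ₁₁*σ₁₁*m₁) + (σ₂₂*σ₂₂*m₂) ≤ S*W := by
        have u1 : σ₁₁*σ₁₁*m₁ ≤ σ₁₁*σ₁₁*(U₁*W) :=
          mul_le_mul_of_nonneg_left h1u (by positivity)
        have u2 : σ₂₂*σ₂₂*m₂ ≤ σ₂₂*σ₂₂*(U₂*W) :=
          mul_le_mul_of_nonneg_left h2u (by positivity)
        rw [hSexp]
        linarith [u1, u2]
      have hsum : c*W*((σ₁₁*σ₁₁*m₁) + (σ₂₂*σ₂₂*m₂)) ≤ c*S*W^2 := by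
        have := mul_le_mul_of_nonneg_left h9 (show (0:ℝ) ≤ c*W by positivity)
        linarith [this]
      have hDS : c*S*W^2 ≤ D*W^2 := by
        have := mul_le_mul_of_nonneg_right hcD (sq_nonneg W)
        linarith [this]
      linarith [hb2, hprod, hsum, hDS, sq_nonneg (c*W)]
  · rw [hmat2]
    have hρ2 : ρ₁₂^2 ≤ 1 := by nlinarith [hρl, hρu]
    have h1u' : σ₁₁*σ₁₁*m₁ ≤ σ₁₁*σ₁₁*(U₁*W) :=
      mul_le_mul_of_nonneg_left h1u (by positivity)
    have h2u' : σ₂₂*σ₂₂*m₂ ≤ σ₂₂*σ₂₂*(U₂*W) :=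
      mul_le_mul_of_nonneg_left h2u (by positivity)
    have hc'W := mul_le_mul_of_nonneg_right hc'S hW0.le
    have hpos1 : (0:ℝ) ≤ σ₁₁*σ₁₁*U₁*W := by positivity
    have hpos2 : (0:ℝ) ≤ σ₂₂*σ₂₂*U₂*W := by positivity
    have hposU3 : (0:ℝ) ≤ σ₁₁*σ₂₂*U₃*W := by positivity
    have hfac1 : σ₁₁*σ₂₂*U₃*W ≤ c'*W - σ₁₁*σ₁₁*m₁ := by linarith [h1u', hc'W, hpos2]
    have hfac2 : σ₁₁*σ₂₂*U₃*W ≤ c'*W - σ₂₂*σ₂₂*m₂ := by linarith [h2u', hc'W, hpos1]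
    apply posSemidef_fin_two
    · linarith [hfac1, hposU3]
    · linarith [hfac2, hposU3]
    · have hm3sq : m₃^2 ≤ (U₃*W)^2 := pow_le_pow_left₀ hm₃0 h3u 2
      have hbb : (ρ₁₂*σ₁₁*σ₂₂*m₃)^2 ≤ (σ₁₁*σ₂₂*U₃*W)^2 := by
        have f := mul_le_mul hρ2 hm3sq (sq_nonneg m₃) zero_le_one
        have f2 := mul_le_mul_of_nonneg_left f (show (0:ℝ) ≤ (σ₁₁*σ₂₂)^2 by positivity)
        linarith [f2]
      have hff := mul_le_mul hfac1 hfac2 hposU3 (le_trans hposU3 hfac1)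
      linarith [hbb, hff]
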